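/- General strong cut-elimination: Every coherent canonical system G admits strong cut-elimination, i.e., whenever a sequent s is derivable in G from a set of sequents S, there exists a derivation of s from S in which every cut formula occurs in some sequent of S. In particular (S = ∅), every sequent provable in G from no assumptions has a cut-free proof. -/

import Mathlib

/-- A propositional language: a type of connectives with arities. -/
structure Lang where
  Conn : Type
  arity : Conn → ℕ

/-- Formulas over a language, with atoms indexed by ℕ. -/
inductive Fm (L : Lang) : Type
  | atom : ℕ → Fm L
  | conn : (c : L.Conn) → (Fin (L.arity c) → Fm L) → Fm L

/-- The substitution determined by its values on atoms. -/
def Fm.subst {L : Lang} (σ : ℕ → Fm L) : Fm L → Fm L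
  | .atom n => σ n
  | .conn c f => .conn c (fun i => (f i).subst σ)

/-- A non-strict single-conclusion sequent Γ ⇒ E. -/
structure Sequent (L : Lang) where
  left : Set (Fm L)
  right : Option (Fm L)

/-- A Horn clause over atoms p₁,…,pₙ (represented by `Fin n`). -/
structure Clause (n : ℕ) where
  lhs : Set (Fin n)
  rhs : Option (Fin n)

/-- A canonical right-introduction rule for a connective. -/
structure RightRule (L : Lang) where
  conn : L.Conn
  prem : Set (Clause (L.arity conn))

/-- A canonical left-introduction rule, with hard and soft premises. -/
structure LeftRule (L : Lang) where
  conn : L.Conn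
  hard : Set (Clause (L.arity conn))
  soft : Set (Set (Fin (L.arity conn)))

/-- A canonical system: a collection of canonical rules. -/
structure CanSys (L : Lang) where
  rights : Set (RightRule L)
  lefts : Set (LeftRule L)

/-- The sequent obtained by instantiating a clause with a substitution. -/
def Clause.seq {L : Lang} {n : ℕ} (σ : Fin n → Fm L) (c : Clause n) : Sequent L :=
  ⟨σ '' c.lhs, c.rhs.map σ⟩

/-- Derivability in a canonical system `G` from assumptions `S`,
where all cut formulas must belong to `C`. -/
inductive Deriv {L : Lang} (G : CanSys L) (S : Set (Sequent L)) (C : Set (Fm L)) :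
    Sequent L → Prop
  | hyp {s : Sequent L} : s ∈ S → Deriv G S C s
  | ax (φ : Fm L) : Deriv G S C ⟨{φ}, some φ⟩
  | weakL {Γ Γ' : Set (Fm L)} {E : Option (Fm L)} :
      Deriv G S C ⟨Γ, E⟩ → Γ ⊆ Γ' → Deriv G S C ⟨Γ', E⟩
  | weakR {Γ : Set (Fm L)} (ψ : Fm L) :
      Deriv G S C ⟨Γ, none⟩ → Deriv G S C ⟨Γ, some ψ⟩
  | cut {Γ Δ : Set (Fm L)} {φ : Fm L} {E : Option (Fm L)} :
      φ ∈ C → Deriv G S C ⟨Γ, some φ⟩ → Deriv G S C ⟨insert φ Δ, E⟩ →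
      Deriv G S C ⟨Γ ∪ Δ, E⟩
  | right {Γ : Set (Fm L)} (rr : RightRule L) (hr : rr ∈ G.rights)
      (σ : Fin (L.arity rr.conn) → Fm L) :
      (∀ c ∈ rr.prem, Deriv G S C ⟨Γ ∪ σ '' c.lhs, c.rhs.map σ⟩) →
      Deriv G S C ⟨Γ, some (Fm.conn rr.conn σ)⟩
  | left {Γ : Set (Fm L)} {E : Option (Fm L)} (lr : LeftRule L) (hl : lr ∈ G.lefts)
      (σ : Fin (L.arity lr.conn) → Fm L) :
      (∀ c ∈ lr.hard, Deriv G S C ⟨Γ ∪ σ '' c.lhs, c.rhs.map σ⟩) →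
      (∀ t ∈ lr.soft, Deriv G S C ⟨Γ ∪ σ '' t, E⟩) →
      Deriv G S C ⟨insert (Fm.conn lr.conn σ) Γ, E⟩

/-- The set of formulas occurring in some sequent of `S`. -/
def cutFms {L : Lang} (S : Set (Sequent L)) : Set (Fm L) :=
  {φ | ∃ s ∈ S, φ ∈ s.left ∨ s.right = some φ}

/-- Classical satisfaction of a Horn clause by a two-valued assignment. -/
def Clause.sat {n : ℕ} (v : Fin n → Bool) (c : Clause n) : Prop :=
  (∃ p ∈ c.lhs, v p = false) ∨ (∃ q, c.rhs = some q ∧ v q = true)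

/-- Joint classical satisfiability of the premises of a left rule and a right rule. -/
def JointSat {L : Lang} (lr : LeftRule L) (rr : RightRule L)
    (h : L.arity lr.conn = L.arity rr.conn) : Prop :=
  ∃ v : Fin (L.arity lr.conn) → Bool,
    (∀ c ∈ lr.hard, c.sat v) ∧
    (∀ t ∈ lr.soft, ∃ p ∈ t, v p = false) ∧
    (∀ c ∈ rr.prem, c.sat (fun i => v (Fin.cast h.symm i)))

/-- Coherence: matching left/right rule pairs have jointly unsatisfiable premises. -/
def Coherent {L : Lang} (G : CanSys L) : Prop :=
  ∀ lr ∈ G.lefts, ∀ rr ∈ G.rights, ∀ h : lr.conn = rr.conn,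
    ¬ JointSat lr rr (congrArg L.arity h)

section Semantics

variable {L : Lang} {W : Type}

/-- A sequent is locally true at a world. -/
def locT (v : W → Fm L → Bool) (a : W) (s : Sequent L) : Prop :=
  (∃ ψ ∈ s.left, v a ψ = false) ∨ (∃ φ, s.right = some φ ∧ v a φ = true)

/-- A sequent is (absolutely) true at a world: locally true at all successors. -/
def absT (le : W → W → Prop) (v : W → Fm L → Bool) (a : W) (s : Sequent L) : Prop :=
  ∀ b, le a b → locT v b s

/-- Persistence of a valuation. -/
def PersistentU (le : W → W → Prop) (v : W → Fm L → Bool) : Prop :=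
  ∀ (φ : Fm L) (a b : W), le a b → v a φ = true → v b φ = true

/-- A valuation respects a right-introduction rule. -/
def RespR (le : W → W → Prop) (v : W → Fm L → Bool) (rr : RightRule L) : Prop :=
  ∀ (a : W) (σ : Fin (L.arity rr.conn) → Fm L),
    (∀ c ∈ rr.prem, absT le v a (c.seq σ)) → v a (Fm.conn rr.conn σ) = true

/-- A valuation respects a left-introduction rule. -/
def RespL (le : W → W → Prop) (v : W → Fm L → Bool) (lr : LeftRule L) : Prop :=
  ∀ (a : W) (σ : Fin (L.arity lr.conn) → Fm L),
    (∀ c ∈ lr.hard, absT le v a (c.seq σ)) →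
    (∀ t ∈ lr.soft, locT v a ⟨σ '' t, (none : Option (Fm L))⟩) →
    v a (Fm.conn lr.conn σ) = false

/-- A valuation is G-legal: it respects all rules of G. -/
def LegalU (G : CanSys L) (le : W → W → Prop) (v : W → Fm L → Bool) : Prop :=
  (∀ rr ∈ G.rights, RespR le v rr) ∧ (∀ lr ∈ G.lefts, RespL le v lr)

end Semantics

/-- Semantic consequence: every G-legal frame which is a model of S is a model of s. -/
def SemConseq {L : Lang} (G : CanSys L) (S : Set (Sequent L)) (s : Sequent L) : Prop :=
  ∀ (W : Type) (le : W → W → Prop),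
    (∀ a, le a a) → (∀ a b c, le a b → le b c → le a c) →
    (∀ a b, le a b → le b a → a = b) → Nonempty W →
    ∀ v : W → Fm L → Bool, PersistentU le v → LegalU G le v →
      (∀ t ∈ S, ∀ a, locT v a t) → (∀ a, locT v a s)


section CutElimAux

variable {L : Lang} {G : CanSys L} {S : Set (Sequent L)}

private lemma Deriv.toE {C Γ : Set (Fm L)}
    (h : Deriv G S C ⟨Γ, none⟩) : ∀ E : Option (Fm L), Deriv G S C ⟨Γ, E⟩
  | none => h
  | some ψ => Deriv.weakR ψ h

private lemma Deriv.conv {C Γ Γ' : Set (Fm L)} {E : Option (Fm L)}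
    (h : Deriv G S C ⟨Γ, E⟩) (he : Γ = Γ') : Deriv G S C ⟨Γ', E⟩ := he ▸ h

/-- Admissibility of cut on `φ` with cut formulas restricted to `cutFms S`. -/
private def Adm (G : CanSys L) (S : Set (Sequent L)) (φ : Fm L) : Prop :=
  ∀ (Δ : Set (Fm L)) (E : Option (Fm L)), Deriv G S (cutFms S) ⟨Δ, E⟩ →
    ∀ (Γ : Set (Fm L)), Deriv G S (cutFms S) ⟨Γ, some φ⟩ →
      Deriv G S (cutFms S) ⟨Γ ∪ (Δ \ {φ}), E⟩

private lemma multiCut {m : ℕ} (σ : Fin m → Fm L) (hadm : ∀ i, Adm G S (σ i))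
    (Θ : Set (Fm L)) (r : Option (Fm L)) (t : Set (Fin m))
    (hp : ∀ p ∈ t, Deriv G S (cutFms S) ⟨Θ, some (σ p)⟩)
    (hd : Deriv G S (cutFms S) ⟨Θ ∪ σ '' t, r⟩) : Deriv G S (cutFms S) ⟨Θ, r⟩ := by
  revert hp hd
  refine Set.Finite.induction_on (motive := fun t _ => (∀ p ∈ t, Deriv G S (cutFms S) ⟨Θ, some (σ p)⟩) →
      Deriv G S (cutFms S) ⟨Θ ∪ σ '' t, r⟩ → Deriv G S (cutFms S) ⟨Θ, r⟩)
    t (Set.toFinite t) ?_ ?_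
  · intro _ hd
    exact Deriv.conv hd (by simp)
  · intro a s _ _ ih hp hd
    have h1 := hadm a _ r hd Θ (hp a (Set.mem_insert _ _))
    refine ih (fun p hps => hp p (Set.mem_insert_of_mem _ hps)) (Deriv.weakL h1 ?_)
    rintro x (hx | ⟨(hx | ⟨p, hps, rfl⟩), hne⟩)
    · exact Or.inl hx
    · exact Or.inl hx
    · rcases hps with rfl | hps
      · exact absurd rfl hne
      · exact Or.inr ⟨p, hps, rfl⟩

private lemma conn_inj {c c' : L.Conn} {f : Fin (L.arity c) → Fm L} {g : Fin (L.arity c') → Fm L}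
    (h : Fm.conn c f = Fm.conn c' g) :
    ∃ e : c = c', ∀ i : Fin (L.arity c'), g i = f (Fin.cast (congrArg L.arity e).symm i) := by
  injection h with h1 h2
  subst h1
  exact ⟨rfl, fun i => by rw [eq_of_heq h2.symm]; rfl⟩

private lemma step (hcoh : Coherent G) (φ : Fm L)
    (hsub : ∀ (c : L.Conn) (σφ : Fin (L.arity c) → Fm L), φ = Fm.conn c σφ →
      ∀ i, Adm G S (σφ i)) :
    Adm G S φ := by
  classical
  by_cases hφC : φ ∈ cutFms S
  · intro Δ E hΔ Γ hΓ
    refine Deriv.cut hφC hΓ (Deriv.weakL hΔ ?_)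
    intro x hx
    by_cases hx' : x = φ
    · exact hx' ▸ Set.mem_insert _ _
    · exact Set.mem_insert_of_mem _ ⟨hx, hx'⟩
  intro Δ E hΔ
  suffices h : ∀ s, Deriv G S (cutFms S) s → ∀ Γ, Deriv G S (cutFms S) ⟨Γ, some φ⟩ →
      Deriv G S (cutFms S) ⟨Γ ∪ (s.left \ {φ}), s.right⟩ by
    intro Γ hΓ; exact h ⟨Δ, E⟩ hΔ Γ hΓ
  clear hΔ; clear Δ E
  intro s hs
  induction hs with
  | @hyp s hsS =>
    intro Γ _
    have hφs : φ ∉ s.left := fun h => hφC ⟨s, hsS, Or.inl h⟩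
    refine Deriv.weakL (Deriv.hyp hsS) ?_
    intro x hx
    exact Or.inr ⟨hx, fun he => hφs (he ▸ hx)⟩
  | ax ψ =>
    intro Γ hΓ
    by_cases hψ : ψ = φ
    · subst hψ
      exact Deriv.weakL hΓ Set.subset_union_left
    · refine Deriv.weakL (Deriv.ax ψ) ?_
      intro x hx
      rcases hx with rfl
      exact Or.inr ⟨rfl, hψ⟩
  | @weakL Γ₁ Γ₂ E₀ h hsb ih =>
    intro Γ hΓ
    exact Deriv.weakL (ih Γ hΓ)
      (Set.union_subset_union_right _ (Set.diff_subset_diff_left hsb))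
  | @weakR Γ₁ ψ h ih =>
    intro Γ hΓ
    exact Deriv.weakR ψ (ih Γ hΓ)
  | @cut Γ₁ Γ₂ ψ E₀ hψC h1 h2 ih1 ih2 =>
    intro Γ hΓ
    have a1 := ih1 Γ hΓ
    have a2 := ih2 Γ hΓ
    have a2' : Deriv G S (cutFms S) ⟨insert ψ (Γ ∪ (Γ₂ \ {φ})), E₀⟩ := by
      refine Deriv.weakL a2 ?_
      rintro x (hx | ⟨(rfl | hx), hne⟩)
      · exact Or.inr (Or.inl hx)
      · exact Or.inl rfl
      · exact Or.inr (Or.inr ⟨hx, hne⟩)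
    refine Deriv.conv (Deriv.cut hψC a1 a2') ?_
    ext x
    simp only [Set.mem_union, Set.mem_diff, Set.mem_singleton_iff]
    tauto
  | @right Γ₀ rr hr σ hp ih =>
    intro Γ hΓ
    refine Deriv.right rr hr σ (fun cl hcl => Deriv.weakL (ih cl hcl Γ hΓ) ?_)
    rintro x (hx | ⟨(hx | hx), hne⟩)
    · exact Or.inl (Or.inl hx)
    · exact Or.inl (Or.inr ⟨hx, hne⟩)
    · exact Or.inr hx
  | @left Γ₀ E₀ lr hl σ hh hsoft ihh ihs =>
    intro Γ hΓ
    by_cases hu : Fm.conn lr.conn σ = φ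
    · -- principal case
      suffices hsuf : Deriv G S (cutFms S) ⟨Γ ∪ (Γ₀ \ {φ}), E₀⟩ by
        refine Deriv.weakL hsuf ?_
        rintro x (hx | ⟨hx, hne⟩)
        · exact Or.inl hx
        · exact Or.inr ⟨Or.inr hx, hne⟩
      have inner : ∀ s', Deriv G S (cutFms S) s' → s'.right = some φ →
          Deriv G S (cutFms S) ⟨s'.left ∪ (Γ₀ \ {φ}), E₀⟩ := by
        intro s' hs'
        induction hs' with
        | @hyp s₂ h₂ =>
          intro hr2
          exact absurd ⟨s₂, h₂, Or.inr hr2⟩ hφC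
        | ax ψ =>
          intro hr2
          obtain rfl : φ = ψ := by injection hr2 with h; exact h.symm
          have res := Deriv.left lr hl σ hh hsoft
          rw [hu] at res
          refine Deriv.weakL res ?_
          rintro x (rfl | hx)
          · exact Or.inl rfl
          · by_cases hne : x = φ
            · exact Or.inl hne
            · exact Or.inr ⟨hx, hne⟩
        | @weakL Γa Γb Eb h₂ hsb₂ ih₂ =>
          intro hr2
          exact Deriv.weakL (ih₂ hr2) (Set.union_subset_union_left _ hsb₂)
        | @weakR Γa ψ h₂ _ =>
          intro _
          exact Deriv.toE (Deriv.weakL h₂ Set.subset_union_left) E₀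
        | @cut Γa Γb ψ Eb hψC h1 h2 _ ih2 =>
          intro hr2
          have a2 := ih2 hr2
          have a2' : Deriv G S (cutFms S) ⟨insert ψ (Γb ∪ (Γ₀ \ {φ})), E₀⟩ :=
            Deriv.conv a2 (by rw [Set.insert_union])
          exact Deriv.conv (Deriv.cut hψC h1 a2') (Set.union_assoc _ _ _).symm
        | @left Γa Eb lr₂ hl₂ σ₂ hh₂ hs₂ _ ihs₂ =>
          intro hr2
          have res : Deriv G S (cutFms S)
              ⟨insert (Fm.conn lr₂.conn σ₂) (Γa ∪ (Γ₀ \ {φ})), E₀⟩ :=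
            Deriv.left lr₂ hl₂ σ₂
              (fun cl hcl => Deriv.weakL (hh₂ cl hcl) (by
                rintro x (hx | hx)
                · exact Or.inl (Or.inl hx)
                · exact Or.inr hx))
              (fun t ht => Deriv.conv (ihs₂ t ht hr2) (Set.union_right_comm _ _ _))
          exact Deriv.conv res (by rw [Set.insert_union])
        | @right Γc rr₂ hrr₂ σℓ hprem _ =>
          intro hr2
          have hφ2 : Fm.conn rr₂.conn σℓ = φ := by injection hr2
          have hcc : Fm.conn lr.conn σ = Fm.conn rr₂.conn σℓ := hu.trans hφ2.symm
          obtain ⟨e, he⟩ := conn_inj hcc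
          set Θ : Set (Fm L) := Γc ∪ (Γ₀ \ {φ}) with hΘ
          set v : Fin (L.arity lr.conn) → Bool :=
            fun i => if Deriv G S (cutFms S) ⟨Θ, some (σ i)⟩ then true else false with hv
          have hvt : ∀ i, v i = true ↔ Deriv G S (cutFms S) ⟨Θ, some (σ i)⟩ := by
            intro i
            by_cases h : Deriv G S (cutFms S) ⟨Θ, some (σ i)⟩ <;> simp [hv, h]
          have hD : Deriv G S (cutFms S) ⟨Γc, some φ⟩ :=
            hφ2 ▸ Deriv.right rr₂ hrr₂ σℓ hprem
          have hsub1 : ∀ X : Set (Fm L), Γc ∪ ((Γ₀ ∪ X) \ {φ}) ⊆ Θ ∪ X := by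
            rintro X x (hx | ⟨(hx | hx), hne⟩)
            · exact Or.inl (Or.inl hx)
            · exact Or.inl (Or.inr ⟨hx, hne⟩)
            · exact Or.inr hx
          have Hh : ∀ cl ∈ lr.hard, Deriv G S (cutFms S) ⟨Θ ∪ σ '' cl.lhs, cl.rhs.map σ⟩ :=
            fun cl hcl => Deriv.weakL (ihh cl hcl Γc hD) (hsub1 _)
          have Hs : ∀ t ∈ lr.soft, Deriv G S (cutFms S) ⟨Θ ∪ σ '' t, E₀⟩ :=
            fun t ht => Deriv.weakL (ihs t ht Γc hD) (hsub1 _)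
          have Hr : ∀ cl ∈ rr₂.prem,
              Deriv G S (cutFms S) ⟨Θ ∪ σℓ '' cl.lhs, cl.rhs.map σℓ⟩ :=
            fun cl hcl => Deriv.weakL (hprem cl hcl)
              (Set.union_subset_union_left _ Set.subset_union_left)
          have hadmσ : ∀ i, Adm G S (σ i) := hsub lr.conn σ hu.symm
          have hadmσℓ : ∀ i, Adm G S (σℓ i) := hsub rr₂.conn σℓ hφ2.symm
          have hns := hcoh lr hl rr₂ hrr₂ e
          have key : (¬ ∀ cl ∈ lr.hard, cl.sat v) ∨ (¬ ∀ t ∈ lr.soft, ∃ p ∈ t, v p = false)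
              ∨ (¬ ∀ cl ∈ rr₂.prem, cl.sat fun i => v (Fin.cast (congrArg L.arity e).symm i)) := by
            by_contra hk
            push_neg at hk
            exact hns ⟨v, hk.1, hk.2.1, hk.2.2⟩
          have btrue : ∀ b : Bool, b ≠ false → b = true := by decide
          show Deriv G S (cutFms S) ⟨Θ, E₀⟩
          rcases key with h1 | h2 | h3
          · push_neg at h1
            obtain ⟨cl, hcl, hnsat⟩ := h1
            rw [Clause.sat] at hnsat
            push_neg at hnsat
            obtain ⟨ha, hb⟩ := hnsat
            have hder := multiCut σ hadmσ Θ _ cl.lhs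
              (fun p hp => (hvt p).1 (btrue _ (ha p hp))) (Hh cl hcl)
            cases hrh : cl.rhs with
            | none => rw [hrh] at hder; exact Deriv.toE hder E₀
            | some q =>
              rw [hrh] at hder
              exact absurd ((hvt q).2 hder) (hb q hrh)
          · push_neg at h2
            obtain ⟨t, ht, hall⟩ := h2
            exact multiCut σ hadmσ Θ E₀ t
              (fun p hp => (hvt p).1 (btrue _ (hall p hp))) (Hs t ht)
          · push_neg at h3
            obtain ⟨cl, hcl, hnsat⟩ := h3
            rw [Clause.sat] at hnsat
            push_neg at hnsat
            obtain ⟨ha, hb⟩ := hnsat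
            have hder := multiCut σℓ hadmσℓ Θ _ cl.lhs
              (fun p hp => by
                rw [he p]
                exact (hvt _).1 (btrue _ (ha p hp))) (Hr cl hcl)
            cases hrh : cl.rhs with
            | none => rw [hrh] at hder; exact Deriv.toE hder E₀
            | some q =>
              rw [hrh] at hder
              have hder' : Deriv G S (cutFms S)
                  ⟨Θ, some (σ (Fin.cast (congrArg L.arity e).symm q))⟩ := by
                simpa [he q] using hder
              exact absurd ((hvt _).2 hder') (hb q hrh)
      exact inner ⟨Γ, some φ⟩ hΓ rfl
    · -- non-principal
      have res : Deriv G S (cutFms S)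
          ⟨insert (Fm.conn lr.conn σ) (Γ ∪ (Γ₀ \ {φ})), E₀⟩ := Deriv.left lr hl σ
        (fun cl hcl => Deriv.weakL (ihh cl hcl Γ hΓ) (by
          rintro x (hx | ⟨(hx | hx), hne⟩)
          · exact Or.inl (Or.inl hx)
          · exact Or.inl (Or.inr ⟨hx, hne⟩)
          · exact Or.inr hx))
        (fun t ht => Deriv.weakL (ihs t ht Γ hΓ) (by
          rintro x (hx | ⟨(hx | hx), hne⟩)
          · exact Or.inl (Or.inl hx)
          · exact Or.inl (Or.inr ⟨hx, hne⟩)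
          · exact Or.inr hx))
      refine Deriv.conv res ?_
      ext x
      simp only [Set.mem_insert_iff, Set.mem_union, Set.mem_diff, Set.mem_singleton_iff]
      constructor
      · rintro (rfl | (hx | ⟨hx, hne⟩))
        · exact Or.inr ⟨Or.inl rfl, hu⟩
        · exact Or.inl hx
        · exact Or.inr ⟨Or.inr hx, hne⟩
      · rintro (hx | ⟨(rfl | hx), hne⟩)
        · exact Or.inr (Or.inl hx)
        · exact Or.inl rfl
        · exact Or.inr (Or.inr ⟨hx, hne⟩)

private lemma cutAdm (hcoh : Coherent G) (φ : Fm L) : Adm G S φ := by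
  induction φ with
  | atom n => exact step hcoh _ (fun c σφ h => nomatch h)
  | conn c f ih =>
    refine step hcoh _ (fun c' σφ h i => ?_)
    obtain ⟨e, he⟩ := conn_inj h
    rw [he i]
    exact ih _

end CutElimAux

/-- Every coherent canonical system admits strong
cut-elimination; in particular, provable sequents have cut-free proofs. -/
theorem strong_cut_elimination {L : Lang} (G : CanSys L) (hcoh : Coherent G) :
    (∀ (S : Set (Sequent L)) (s : Sequent L),
      Deriv G S Set.univ s → Deriv G S (cutFms S) s) ∧
    (∀ s : Sequent L, Deriv G ∅ Set.univ s → Deriv G ∅ ∅ s) := by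
  have main : ∀ (S : Set (Sequent L)) (s : Sequent L),
      Deriv G S Set.univ s → Deriv G S (cutFms S) s := by
    intro S s hd
    induction hd with
    | hyp h => exact .hyp h
    | ax ψ => exact .ax ψ
    | weakL h hsb ih => exact .weakL ih hsb
    | weakR ψ h ih => exact .weakR ψ ih
    | @cut Γ Δ ψ E _ h1 h2 ih1 ih2 =>
      refine Deriv.weakL (cutAdm hcoh ψ _ _ ih2 _ ih1) ?_
      rintro x (hx | ⟨(rfl | hx), hne⟩)
      · exact Or.inl hx
      · exact absurd rfl hne
      · exact Or.inr hx
    | right rr hr σ hp ih => exact .right rr hr σ ih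
    | left lr hl σ hh hs ihh ihs => exact .left lr hl σ ihh ihs
  refine ⟨main, fun s hd => ?_⟩
  have h := main ∅ s hd
  rwa [show cutFms (∅ : Set (Sequent L)) = ∅ by ext x; simp [cutFms]] at h
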